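/- Let G be a group, A a finite set, and X ⊆ A^G a subshift in which the set of periodic configurations is dense. Then the automorphism group Aut(X), consisting of all bijective cellular automata X → X under composition, is residually finite. -/

import Mathlib

/-- The shift action of a group `G` on configurations `x : G → A`:
`(g • x)(h) = x(g⁻¹h)`. -/
def shift {G A : Type*} [Group G] (g : G) (x : G → A) : G → A :=
  fun h => x (g⁻¹ * h)

/-- A subshift is a closed, shift-invariant subset of `A^G` (with the prodiscrete topology). -/
def IsSubshift {G A : Type*} [Group G] [TopologicalSpace A] (X : Set (G → A)) : Prop :=
  IsClosed X ∧ ∀ (g : G) (x : G → A), x ∈ X → shift g x ∈ X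

/-- A configuration is periodic if its orbit under the shift action is finite. -/
def IsPeriodicConfig {G A : Type*} [Group G] (x : G → A) : Prop :=
  (Set.range fun g : G => shift g x).Finite

/-- A subshift is of finite type if it is defined by a finite window `Ω` and a set of
allowed patterns `P ⊆ A^Ω`. -/
def IsOfFiniteType {G A : Type*} [Group G] (X : Set (G → A)) : Prop :=
  ∃ (Ω : Finset G) (P : Set ({g : G // g ∈ Ω} → A)),
    X = {x : G → A | ∀ g : G, (fun w : {g : G // g ∈ Ω} => shift g x w.1) ∈ P}

/-- A subshift is strongly irreducible if there is a finite `Δ ⊆ G` such that any two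
patterns of configurations of `X` with supports `Ω₁, Ω₂` satisfying `Ω₁Δ⁻¹ ∩ Ω₂ = ∅`
can be glued inside `X`. -/
def IsStronglyIrreducible {G A : Type*} [Group G] (X : Set (G → A)) : Prop :=
  ∃ Δ : Finset G, ∀ Ω₁ Ω₂ : Finset G,
    (∀ a ∈ Ω₁, ∀ d ∈ Δ, a * d⁻¹ ∉ Ω₂) →
    ∀ x₁ ∈ X, ∀ x₂ ∈ X, ∃ x ∈ X,
      (∀ w ∈ Ω₁, x w = x₁ w) ∧ (∀ w ∈ Ω₂, x w = x₂ w)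

/-- A group is residually finite if the intersection of its finite-index subgroups is
trivial, i.e. every nontrivial element avoids some finite-index subgroup. -/
def ResiduallyFinite (H : Type*) [Group H] : Prop :=
  ∀ h : H, h ≠ 1 → ∃ K : Subgroup H, K.FiniteIndex ∧ h ∉ K

/-- An automorphism of a subshift `X ⊆ A^G`: a bijective self-map of `X` that is
continuous (in the prodiscrete topology) with continuous inverse and is
`G`-equivariant (together with its inverse) with respect to the shift action.
(For a subshift, a bijective continuous equivariant map automatically has continuous
equivariant inverse, by compactness and shift-invariance.) -/
structure ShiftAut {G A : Type*} [Group G] [TopologicalSpace A] (X : Set (G → A)) where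
  toEquiv : {x : G → A // x ∈ X} ≃ {x : G → A // x ∈ X}
  continuous_toFun : Continuous fun x : {x : G → A // x ∈ X} => (toEquiv x : G → A)
  continuous_invFun : Continuous fun x : {x : G → A // x ∈ X} => (toEquiv.symm x : G → A)
  equivariant : ∀ (g : G) (x y : {x : G → A // x ∈ X}),
    (y : G → A) = shift g (x : G → A) → (toEquiv y : G → A) = shift g (toEquiv x : G → A)
  equivariant_symm : ∀ (g : G) (x y : {x : G → A // x ∈ X}),
    (y : G → A) = shift g (x : G → A) →
      (toEquiv.symm y : G → A) = shift g (toEquiv.symm x : G → A)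

theorem ShiftAut.ext' {G A : Type*} [Group G] [TopologicalSpace A] {X : Set (G → A)}
    {f g : ShiftAut X} (h : f.toEquiv = g.toEquiv) : f = g := by
  cases f; cases g; cases h; rfl

/-- The automorphism group `Aut(X)` of a subshift, under composition. -/
instance ShiftAut.instGroup {G A : Type*} [Group G] [TopologicalSpace A]
    (X : Set (G → A)) : Group (ShiftAut X) where
  mul f₁ f₂ :=
    { toEquiv := f₂.toEquiv.trans f₁.toEquiv
      continuous_toFun := by
        have h2 : Continuous fun x : {x : G → A // x ∈ X} => f₂.toEquiv x :=
          f₂.continuous_toFun.subtype_mk fun x => (f₂.toEquiv x).2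
        exact f₁.continuous_toFun.comp h2
      continuous_invFun := by
        have h1 : Continuous fun x : {x : G → A // x ∈ X} => f₁.toEquiv.symm x :=
          f₁.continuous_invFun.subtype_mk fun x => (f₁.toEquiv.symm x).2
        exact f₂.continuous_invFun.comp h1
      equivariant := fun g x y h => f₁.equivariant g _ _ (f₂.equivariant g x y h)
      equivariant_symm := fun g x y h =>
        f₂.equivariant_symm g _ _ (f₁.equivariant_symm g x y h) }
  one :=
    { toEquiv := Equiv.refl _
      continuous_toFun := continuous_subtype_val
      continuous_invFun := continuous_subtype_val
      equivariant := fun _ _ _ h => h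
      equivariant_symm := fun _ _ _ h => h }
  inv f :=
    { toEquiv := f.toEquiv.symm
      continuous_toFun := f.continuous_invFun
      continuous_invFun := f.continuous_toFun
      equivariant := f.equivariant_symm
      equivariant_symm := f.equivariant }
  mul_assoc a b c := ShiftAut.ext' (Equiv.ext fun _ => rfl)
  one_mul a := ShiftAut.ext' (Equiv.ext fun _ => rfl)
  mul_one a := ShiftAut.ext' (Equiv.ext fun _ => rfl)
  inv_mul_cancel a := ShiftAut.ext' (Equiv.ext fun x => a.toEquiv.symm_apply_apply x)

lemma shift_one' {G A : Type*} [Group G] (x : G → A) : shift (1 : G) x = x := by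
  funext h; simp [shift]

lemma shift_mul' {G A : Type*} [Group G] (g g' : G) (x : G → A) :
    shift g (shift g' x) = shift (g * g') x := by
  funext h; simp [shift, mul_assoc]

/-- If `X ⊆ A^G` is a subshift in which periodic configurations are dense, then the
automorphism group `Aut(X)` of `X` is residually finite. -/
theorem aut_residually_finite_of_dense_periodic
    {G A : Type*} [Group G] [Finite A] [TopologicalSpace A] [DiscreteTopology A]
    (X : Set (G → A)) (hX : IsSubshift X)
    (hdense : X ⊆ closure {x ∈ X | IsPeriodicConfig x}) :
    ResiduallyFinite (ShiftAut X) := by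
  intro φ hφ
  -- find a point moved by φ
  have hx0 : ∃ x : {x : G → A // x ∈ X}, (φ.toEquiv x : G → A) ≠ (x : G → A) := by
    by_contra h
    push_neg at h
    exact hφ (ShiftAut.ext' (Equiv.ext fun x => Subtype.ext (h x)))
  obtain ⟨x₀, hx₀⟩ := hx0
  -- the set of moved points is open in X
  have hUopen : IsOpen {y : {x : G → A // x ∈ X} | (φ.toEquiv y : G → A) ≠ (y : G → A)} := by
    have : IsClosed {y : {x : G → A // x ∈ X} | (φ.toEquiv y : G → A) = (y : G → A)} :=
      isClosed_eq φ.continuous_toFun continuous_subtype_val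
    exact this.isOpen_compl
  obtain ⟨V, hVopen, hVU⟩ := isOpen_induced_iff.mp hUopen
  -- find a periodic point p moved by φ
  have hx₀V : x₀.val ∈ V := by
    have : x₀ ∈ Subtype.val ⁻¹' V := hVU ▸ hx₀
    exact this
  obtain ⟨p, hpV, hpX, hpPer⟩ :
      ∃ p, p ∈ V ∧ p ∈ X ∧ IsPeriodicConfig p := by
    have := (mem_closure_iff.mp (hdense x₀.2)) V hVopen hx₀V
    obtain ⟨p, hp1, hp2, hp3⟩ := this
    exact ⟨p, hp1, hp2, hp3⟩
  set pX : {x : G → A // x ∈ X} := ⟨p, hpX⟩ with hpXdef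
  have hpU : (φ.toEquiv pX : G → A) ≠ p := by
    have : pX ∈ Subtype.val ⁻¹' V := hpV
    rw [hVU] at this
    exact this
  -- the stabilizer of p
  set H : Subgroup G :=
    { carrier := {g | shift g p = p}
      one_mem' := shift_one' p
      mul_mem' := by
        intro a b ha hb
        show shift (a * b) p = p
        rw [← shift_mul', hb, ha]
      inv_mem' := by
        intro a ha
        show shift a⁻¹ p = p
        have : shift a⁻¹ (shift a p) = p := by
          rw [shift_mul', inv_mul_cancel, shift_one']
        rwa [ha] at this } with hHdef
  have memH : ∀ g : G, g ∈ H ↔ shift g p = p := fun g => Iff.rfl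
  -- G ⧸ H is finite
  have hfinQ : Finite (G ⧸ H) := by
    have hfin : Finite ↥(Set.range fun g : G => shift g p) := hpPer.to_subtype
    refine Finite.of_injective
      (fun c : G ⧸ H => (⟨shift c.out p, ⟨c.out, rfl⟩⟩ :
        ↥(Set.range fun g : G => shift g p))) ?_
    intro c d hcd
    have h1 : shift c.out p = shift d.out p := congrArg Subtype.val hcd
    have h2 : shift (c.out⁻¹ * d.out) p = p := by
      rw [← shift_mul', ← h1, shift_mul', inv_mul_cancel, shift_one']
    have h3 : (c.out : G ⧸ H) = (d.out : G ⧸ H) := QuotientGroup.eq.mpr h2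
    rwa [QuotientGroup.out_eq', QuotientGroup.out_eq'] at h3
  -- the set of H-fixed configurations in X
  set P : {x : G → A // x ∈ X} → Prop :=
    fun x => ∀ g : G, shift g p = p → shift g (x : G → A) = (x : G → A) with hPdef
  have hfinY : Finite {x : {x : G → A // x ∈ X} // P x} := by
    have : Finite (G ⧸ H → A) := Pi.finite
    refine Finite.of_injective
      (fun x : {x : {x : G → A // x ∈ X} // P x} =>
        fun c : G ⧸ H => (x.1 : G → A) c.out⁻¹) ?_
    have key : ∀ (z : {x : {x : G → A // x ∈ X} // P x}) (g : G),
        (z.1 : G → A) g = (z.1 : G → A) ((g⁻¹ : G) : G ⧸ H).out⁻¹ := by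
      intro z g
      set c : G ⧸ H := ((g⁻¹ : G) : G ⧸ H) with hc
      have hmem : g * c.out ∈ H := by
        have : ((g⁻¹ : G) : G ⧸ H) = (c.out : G ⧸ H) := (QuotientGroup.out_eq' c).symm
        have := QuotientGroup.eq.mp this
        simpa using this
      have hk : shift (g * c.out) (z.1 : G → A) = (z.1 : G → A) := z.2 _ hmem
      have := congrFun hk g
      simp only [shift, mul_inv_rev, inv_inv] at this
      rw [← this]
      congr 1
      group
    intro x y hxy
    apply Subtype.ext; apply Subtype.ext; funext g
    have hx := key x g
    have hy := key y g
    rw [hx, hy]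
    exact congrFun hxy ((g⁻¹ : G) : G ⧸ H)
  -- φ and its inverse preserve P
  have fwdP : ∀ (ψ : ShiftAut X) (x : {x : G → A // x ∈ X}), P x → P (ψ.toEquiv x) := by
    intro ψ x hx g hg
    exact (ψ.equivariant g x x (hx g hg).symm).symm
  have bwdP : ∀ (ψ : ShiftAut X) (x : {x : G → A // x ∈ X}), P (ψ.toEquiv x) → P x := by
    intro ψ x hx g hg
    have := (ψ.equivariant_symm g (ψ.toEquiv x) (ψ.toEquiv x) (hx g hg).symm).symm
    simpa using this
  -- the homomorphism to the permutation group of the finite set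
  set ρ : ShiftAut X →* Equiv.Perm {x : {x : G → A // x ∈ X} // P x} :=
    { toFun := fun ψ => Equiv.subtypeEquiv ψ.toEquiv
        (fun x => ⟨fun h => fwdP ψ x h, fun h => bwdP ψ x h⟩)
      map_one' := Equiv.ext fun x => Subtype.ext rfl
      map_mul' := fun ψ₁ ψ₂ => Equiv.ext fun x => Subtype.ext rfl } with hρdef
  refine ⟨ρ.ker, ?_, ?_⟩
  · have : Finite (ShiftAut X ⧸ ρ.ker) := by
      have : Finite (Equiv.Perm {x : {x : G → A // x ∈ X} // P x}) := inferInstance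
      exact Finite.of_injective _ (QuotientGroup.kerLift_injective ρ)
    exact Subgroup.finiteIndex_of_finite_quotient
  · intro hker
    have hPp : P pX := fun g hg => hg
    have h1 : ρ φ = 1 := hker
    have h2 : (ρ φ) ⟨pX, hPp⟩ = ⟨pX, hPp⟩ := by rw [h1]; rfl
    have h3 : (φ.toEquiv pX : G → A) = p := by
      have := congrArg (fun z => ((z : {x : {x : G → A // x ∈ X} // P x}) : {x : G → A // x ∈ X}).val) h2
      exact this
    exact hpU h3
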